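/- Let 1 ≤ a < b ≤ n, l ≥ 2, and a = i_0 < i_1 < ... < i_l = b a strictly increasing chain. For 0 ≤ k ≤ l-1, define σ_k = (i_k i_{k+1})···(i_1 i_2)(a i_1) ∈ S_n. Then for each k ∈ {1,...,l-1}, inv(σ_k) = inv(σ_{k-1}) + 2(i_{k+1} - i_k) - 1; in particular inv(σ_k) > inv(σ_{k-1}). -/
import Mathlib


open Equiv

/-- The number of inversions of a permutation of `{0, …, n-1}` (= Coxeter length). -/
def invNum {n : ℕ} (π : Equiv.Perm (Fin n)) : ℕ :=
  (Finset.univ.filter (fun p : Fin n × Fin n => p.1 < p.2 ∧ π p.2 < π p.1)).card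

/-- The inversion set of a permutation. -/
def InvSet {n : ℕ} (π : Equiv.Perm (Fin n)) : Set (Fin n × Fin n) :=
  {p | p.1 < p.2 ∧ π p.2 < π p.1}

/-- Right weak order: `u ≤_R v` iff `ℓ(u) + ℓ(u⁻¹v) = ℓ(v)`. -/
def wleR {n : ℕ} (u v : Equiv.Perm (Fin n)) : Prop :=
  invNum u + invNum (u⁻¹ * v) = invNum v

/-- The left-reflection set `T_L(σ)` of transpositions `t` with `ℓ(tσ) < ℓ(σ)`. -/
def TL {n : ℕ} (σ : Equiv.Perm (Fin n)) : Set (Equiv.Perm (Fin n)) :=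
  {t | t.IsSwap ∧ invNum (t * σ) < invNum σ}

/-- `σ_k = (i_k i_{k+1}) ⋯ (i_1 i_2)(i_0 i_1)` (product written left to right). -/
def sigmaChain {n : ℕ} (i : ℕ → Fin n) (k : ℕ) : Equiv.Perm (Fin n) :=
  (((List.range (k + 1)).map (fun r => Equiv.swap (i r) (i (r + 1)))).reverse).prod

lemma sigmaChain_zero {n : ℕ} (i : ℕ → Fin n) : sigmaChain i 0 = Equiv.swap (i 0) (i 1) := by
  simp [sigmaChain, List.range_succ]

lemma sigmaChain_succ' {n : ℕ} (i : ℕ → Fin n) (m : ℕ) :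
    sigmaChain i (m+1) = Equiv.swap (i (m+1)) (i (m+2)) * sigmaChain i m := by
  simp [sigmaChain, List.range_succ]

lemma sigmaChain_spec {n : ℕ} (l : ℕ) (i : ℕ → Fin n)
    (hmono : ∀ r, r < l → i r < i (r + 1)) :
    ∀ m, m < l →
      (sigmaChain i m (i 0) = i (m + 1)) ∧
      (∀ x, x ≠ i 0 → sigmaChain i m x = x ∨ sigmaChain i m x < i (m + 1)) ∧
      (∀ x, i (m + 1) < x → sigmaChain i m x = x) := by
  intro m
  induction m with
  | zero =>
    intro hm
    have h01 : i 0 < i 1 := hmono 0 hm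
    rw [sigmaChain_zero]
    refine ⟨Equiv.swap_apply_left _ _, ?_, ?_⟩
    · intro x hx
      rcases eq_or_ne x (i 1) with rfl | hx1
      · right; rw [Equiv.swap_apply_right]; exact h01
      · left; exact Equiv.swap_apply_of_ne_of_ne hx hx1
    · intro x hx
      exact Equiv.swap_apply_of_ne_of_ne (ne_of_gt (lt_trans h01 hx)) (ne_of_gt hx)
  | succ m ih =>
    intro hm
    obtain ⟨h1, h2, h3⟩ := ih (Nat.lt_of_succ_lt hm)
    have hstep : i (m+1) < i (m+2) := hmono (m+1) hm
    rw [sigmaChain_succ']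
    simp only [Equiv.Perm.mul_apply]
    refine ⟨?_, ?_, ?_⟩
    · rw [h1, Equiv.swap_apply_left]
    · intro x hx
      rcases h2 x hx with hfix | hlt
      · rw [hfix]
        rcases eq_or_ne x (i (m+2)) with rfl | hx2
        · right; rw [Equiv.swap_apply_right]; exact hstep
        · have hx1 : x ≠ i (m+1) := by
            intro hh
            exact hx ((sigmaChain i m).injective (by rw [hfix, hh, h1]))
          left; exact Equiv.swap_apply_of_ne_of_ne hx1 hx2
      · right
        rw [Equiv.swap_apply_of_ne_of_ne (ne_of_lt hlt) (ne_of_lt (lt_trans hlt hstep))]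
        exact lt_trans hlt hstep
    · intro x hx
      have hfix := h3 x (lt_trans hstep hx)
      rw [hfix]
      exact Equiv.swap_apply_of_ne_of_ne (ne_of_gt (lt_trans hstep hx)) (ne_of_gt hx)

/-- `inv(σ_k) = inv(σ_{k-1}) + 2(i_{k+1} - i_k) - 1`, in particular
`inv(σ_k) > inv(σ_{k-1})`, for `1 ≤ k ≤ l - 1`. -/
theorem invNum_sigmaChain_succ {n : ℕ} (l : ℕ) (hl : 2 ≤ l) (i : ℕ → Fin n)
    (hmono : ∀ r, r < l → i r < i (r + 1)) (a b : Fin n) (hab : a < b)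
    (ha : i 0 = a) (hb : i l = b) (k : ℕ) (hk1 : 1 ≤ k) (hk2 : k ≤ l - 1) :
    invNum (sigmaChain i k) =
        invNum (sigmaChain i (k - 1)) + (2 * ((i (k + 1) : ℕ) - (i k : ℕ)) - 1) ∧
    invNum (sigmaChain i (k - 1)) < invNum (sigmaChain i k) := by
  obtain ⟨m, rfl⟩ : ∃ m, k = m + 1 := ⟨k - 1, by omega⟩
  simp only [Nat.add_sub_cancel]
  have hml : m < l := by omega
  have hm1l : m + 1 < l := by omega
  obtain ⟨S1, S2, S3⟩ := sigmaChain_spec l i hmono m hml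
  set σ := sigmaChain i m with hσdef
  set τ := sigmaChain i (m+1) with hτdef
  have hτap : ∀ x, τ x = Equiv.swap (i (m+1)) (i (m+2)) (σ x) := by
    intro x; rw [hτdef, sigmaChain_succ', Equiv.Perm.mul_apply]
  have hστ : ∀ x, σ x = Equiv.swap (i (m+1)) (i (m+2)) (τ x) := by
    intro x; rw [hτap x, Equiv.swap_apply_self]
  have hstep : i (m+1) < i (m+2) := hmono (m+1) hm1l
  have hlt : ∀ s, s ≤ l → ∀ r, r < s → i r < i s := by
    intro s
    induction s with
    | zero => intro _ r hr; omega
    | succ t ih =>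
      intro hsl r hr
      rcases Nat.lt_or_ge r t with h | h
      · exact lt_trans (ih (by omega) r h) (hmono t (by omega))
      · have hrt : r = t := by omega
        subst hrt; exact hmono r (by omega)
  have h0m1 : i 0 < i (m+1) := hlt (m+1) (by omega) 0 (by omega)
  have h0m2 : i 0 < i (m+2) := lt_trans h0m1 hstep
  have hinj : ∀ x, σ x = i (m+1) → x = i 0 := fun x h => σ.injective (h.trans S1.symm)
  have hfix2 : σ (i (m+2)) = i (m+2) := S3 _ hstep
  have hinj2 : ∀ x, σ x = i (m+2) → x = i (m+2) := fun x h => σ.injective (h.trans hfix2.symm)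
  have hτ0 : τ (i 0) = i (m+2) := by rw [hτap, S1, Equiv.swap_apply_left]
  have hτ2 : τ (i (m+2)) = i (m+1) := by rw [hτap, hfix2, Equiv.swap_apply_right]
  have hτeq : ∀ x, σ x ≠ i (m+1) → σ x ≠ i (m+2) → τ x = σ x := fun x h1 h2 => by
    rw [hτap]; exact Equiv.swap_apply_of_ne_of_ne h1 h2
  have hτmid : ∀ x, i (m+1) < x → x < i (m+2) → τ x = x := by
    intro x h1x h2x
    rw [hτap, S3 x h1x]
    exact Equiv.swap_apply_of_ne_of_ne (ne_of_gt h1x) (ne_of_lt h2x)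
  -- old inversions are preserved
  have hAB : ∀ p q : Fin n, p < q → σ q < σ p → τ q < τ p := by
    intro p q hpq hσpq
    by_cases hp0 : p = i 0
    · subst hp0
      rw [S1] at hσpq
      rw [hτ0, hτeq q (ne_of_lt hσpq) (ne_of_lt (lt_trans hσpq hstep))]
      exact lt_trans hσpq hstep
    · rcases S2 p hp0 with hfp | hlp
      · have hpm1 : p ≠ i (m+1) := fun h => hp0 (hinj p (by rw [hfp, h]))
        by_cases hpm2 : p = i (m+2)
        · exfalso
          have hq3 := S3 q (lt_of_lt_of_le hstep (le_of_eq (congrArg _ rfl)) |>.trans_le (le_of_eq rfl) |> fun _ => (hpm2 ▸ hpq : i (m+2) < q) |> lt_trans hstep)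
          rw [hq3, hfp, hpm2] at hσpq
          exact absurd (lt_trans hσpq (hpm2 ▸ hpq)) (lt_irrefl q)
        · have hτp : τ p = p := by
            rw [hτeq p (by rw [hfp]; exact hpm1) (by rw [hfp]; exact hpm2), hfp]
          have hq1 : σ q ≠ i (m+1) := by
            intro h
            have hq0 : q = i 0 := hinj q h
            rw [h, hfp] at hσpq
            rw [hq0] at hpq
            exact absurd (lt_trans hσpq (lt_trans hpq h0m1)) (lt_irrefl _)
          have hq2 : σ q ≠ i (m+2) := by
            intro h
            have hq22 : q = i (m+2) := hinj2 q h
            rw [h, hfp] at hσpq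
            rw [hq22] at hpq
            exact absurd (lt_trans hσpq hpq) (lt_irrefl _)
          rw [hτp, hτeq q hq1 hq2]
          rw [hfp] at hσpq; exact hσpq
      · have h2' : σ q < i (m+1) := lt_trans hσpq hlp
        rw [hτeq p (ne_of_lt hlp) (ne_of_lt (lt_trans hlp hstep)),
            hτeq q (ne_of_lt h2') (ne_of_lt (lt_trans h2' hstep))]
        exact hσpq
  -- classification of new inversions
  have hBAN : ∀ p q : Fin n, p < q → τ q < τ p → ¬ σ q < σ p →
      (p = i 0 ∧ i (m+1) < q ∧ q < i (m+2)) ∨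
      ((i (m+1) < p ∧ p < i (m+2)) ∧ q = i (m+2)) ∨
      (p = i 0 ∧ q = i (m+2)) := by
    intro p q hpq hτpq hnσ
    by_cases hp0 : p = i 0
    · subst hp0
      by_cases hq2 : q = i (m+2)
      · exact Or.inr (Or.inr ⟨rfl, hq2⟩)
      · left
        refine ⟨rfl, ?_, ?_⟩
        · have hq0 : q ≠ i 0 := ne_of_gt hpq
          rcases S2 q hq0 with hfq | hlq
          · have hq1 : q ≠ i (m+1) := fun h => hq0 (hinj q (by rw [hfq, h]))
            rw [S1, hfq] at hnσ
            exact lt_of_le_of_ne (not_lt.mp hnσ) (Ne.symm hq1)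
          · rw [S1] at hnσ; exact absurd hlq hnσ
        · have hq0 : q ≠ i 0 := ne_of_gt hpq
          rcases S2 q hq0 with hfq | hlq
          · have hq1 : q ≠ i (m+1) := fun h => hq0 (hinj q (by rw [hfq, h]))
            have hτq : τ q = q := by
              rw [hτeq q (by rw [hfq]; exact hq1) (by rw [hfq]; exact hq2), hfq]
            rw [hτq, hτ0] at hτpq; exact hτpq
          · rw [S1] at hnσ; exact absurd hlq hnσ
    · rcases S2 p hp0 with hfp | hlp
      · have hpm1 : p ≠ i (m+1) := fun h => hp0 (hinj p (by rw [hfp, h]))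
        by_cases hpm2 : p = i (m+2)
        · exfalso
          subst hpm2
          have hq3 : σ q = q := S3 q (lt_trans hstep hpq)
          have hτq : τ q = q := by
            rw [hτeq q (by rw [hq3]; exact ne_of_gt (lt_trans hstep hpq))
                (by rw [hq3]; exact ne_of_gt hpq), hq3]
          rw [hτq, hτ2] at hτpq
          exact absurd (lt_trans hstep (lt_trans hpq hτpq)) (lt_irrefl _)
        · have hτp : τ p = p := by
            rw [hτeq p (by rw [hfp]; exact hpm1) (by rw [hfp]; exact hpm2), hfp]
          by_cases hq2 : q = i (m+2)
          · refine Or.inr (Or.inl ⟨⟨?_, ?_⟩, hq2⟩)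
            · rw [hq2, hτ2, hτp] at hτpq; exact hτpq
            · rw [hq2] at hpq; exact hpq
          · exfalso
            have hq0 : q ≠ i 0 := by
              intro h
              rw [h, hτ0, hτp] at hτpq
              exact absurd (lt_trans hτpq (lt_trans hpq (h ▸ h0m2))) (lt_irrefl _)
            rcases S2 q hq0 with hfq | hlq
            · have hq1 : q ≠ i (m+1) := fun h => hq0 (hinj q (by rw [hfq, h]))
              have hτq : τ q = q := by
                rw [hτeq q (by rw [hfq]; exact hq1) (by rw [hfq]; exact hq2), hfq]
              rw [hτq, hτp] at hτpq
              exact absurd (lt_trans hpq hτpq) (lt_irrefl _)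
            · have hτq : τ q = σ q := hτeq q (ne_of_lt hlq) (ne_of_lt (lt_trans hlq hstep))
              rw [hτq, hτp] at hτpq
              rw [hfp] at hnσ
              exact hnσ hτpq
      · exfalso
        have hτp : τ p = σ p := hτeq p (ne_of_lt hlp) (ne_of_lt (lt_trans hlp hstep))
        rw [hτp] at hτpq
        have hτq1 : τ q < i (m+1) := lt_trans hτpq hlp
        have hσq : σ q = τ q := by
          rw [hστ q]
          exact Equiv.swap_apply_of_ne_of_ne (ne_of_lt hτq1) (ne_of_lt (lt_trans hτq1 hstep))
        exact hnσ (by rw [hσq]; exact hτpq)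
  -- the finsets
  classical
  set I := Finset.Ioo (i (m+1)) (i (m+2)) with hIdef
  set N := (I.image fun q => ((i 0, q) : Fin n × Fin n)) ∪ (I.image fun p => (p, i (m+2)))
      ∪ {((i 0, i (m+2)) : Fin n × Fin n)} with hNdef
  set A := Finset.univ.filter (fun p : Fin n × Fin n => p.1 < p.2 ∧ σ p.2 < σ p.1) with hAdef
  set B := Finset.univ.filter (fun p : Fin n × Fin n => p.1 < p.2 ∧ τ p.2 < τ p.1) with hBdef
  have hmemN : ∀ p q : Fin n, (p, q) ∈ N ↔
      (p = i 0 ∧ q ∈ I) ∨ (p ∈ I ∧ q = i (m+2)) ∨ (p = i 0 ∧ q = i (m+2)) := by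
    intro p q
    simp only [hNdef, Finset.mem_union, Finset.mem_image, Finset.mem_singleton, Prod.mk.injEq]
    constructor
    · rintro ((⟨x, hx, h1, h2⟩ | ⟨x, hx, h1, h2⟩) | ⟨h1, h2⟩)
      · exact Or.inl ⟨h1.symm, h2 ▸ hx⟩
      · exact Or.inr (Or.inl ⟨h1 ▸ hx, h2.symm⟩)
      · exact Or.inr (Or.inr ⟨h1, h2⟩)
    · rintro (⟨h1, h2⟩ | ⟨h1, h2⟩ | ⟨h1, h2⟩)
      · exact Or.inl (Or.inl ⟨q, h2, h1.symm, rfl⟩)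
      · exact Or.inl (Or.inr ⟨p, h1, rfl, h2.symm⟩)
      · exact Or.inr ⟨h1, h2⟩
  have hBeq : B = A ∪ N := by
    ext ⟨p, q⟩
    simp only [hAdef, hBdef, Finset.mem_union, Finset.mem_filter, Finset.mem_univ, true_and]
    constructor
    · rintro ⟨hpq, hτpq⟩
      by_cases hσpq : σ q < σ p
      · exact Or.inl ⟨hpq, hσpq⟩
      · right
        rw [hmemN p q]
        rcases hBAN p q hpq hτpq hσpq with ⟨h1, h2, h3⟩ | ⟨⟨h1, h2⟩, h3⟩ | ⟨h1, h2⟩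
        · exact Or.inl ⟨h1, Finset.mem_Ioo.mpr ⟨h2, h3⟩⟩
        · exact Or.inr (Or.inl ⟨Finset.mem_Ioo.mpr ⟨h1, h2⟩, h3⟩)
        · exact Or.inr (Or.inr ⟨h1, h2⟩)
    · rintro (⟨hpq, hσpq⟩ | hN')
      · exact ⟨hpq, hAB p q hpq hσpq⟩
      · rw [hmemN p q] at hN'
        rcases hN' with ⟨h1, h2⟩ | ⟨h1, h2⟩ | ⟨h1, h2⟩
        · obtain ⟨ha1, ha2⟩ := Finset.mem_Ioo.mp h2
          subst h1
          refine ⟨lt_trans h0m1 ha1, ?_⟩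
          rw [hτ0, hτmid q ha1 ha2]
          exact ha2
        · obtain ⟨ha1, ha2⟩ := Finset.mem_Ioo.mp h1
          subst h2
          refine ⟨ha2, ?_⟩
          rw [hτ2, hτmid p ha1 ha2]
          exact ha1
        · subst h1; subst h2
          exact ⟨h0m2, by rw [hτ0, hτ2]; exact hstep⟩
  have hdisj : Disjoint A N := by
    rw [Finset.disjoint_left]
    rintro ⟨p, q⟩ hpA hpN
    rw [hmemN p q] at hpN
    simp only [hAdef, Finset.mem_filter, Finset.mem_univ, true_and] at hpA
    obtain ⟨hpq, hσpq⟩ := hpA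
    rcases hpN with ⟨h1, h2⟩ | ⟨h1, h2⟩ | ⟨h1, h2⟩
    · obtain ⟨ha1, ha2⟩ := Finset.mem_Ioo.mp h2
      rw [h1, S1, S3 q ha1] at hσpq
      exact absurd (lt_trans ha1 hσpq) (lt_irrefl _)
    · obtain ⟨ha1, ha2⟩ := Finset.mem_Ioo.mp h1
      rw [h2, hfix2, S3 p ha1] at hσpq
      exact absurd (lt_trans ha2 hσpq) (lt_irrefl _)
    · rw [h1, h2, hfix2, S1] at hσpq
      exact absurd (lt_trans hstep hσpq) (lt_irrefl _)
  have hc1 : (I.image fun q => ((i 0, q) : Fin n × Fin n)).card = I.card :=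
    Finset.card_image_of_injective _ (fun a b h => (Prod.ext_iff.mp h).2)
  have hc2 : (I.image fun p => ((p, i (m+2)) : Fin n × Fin n)).card = I.card :=
    Finset.card_image_of_injective _ (fun a b h => (Prod.ext_iff.mp h).1)
  have hd12 : Disjoint (I.image fun q => ((i 0, q) : Fin n × Fin n))
      (I.image fun p => ((p, i (m+2)) : Fin n × Fin n)) := by
    rw [Finset.disjoint_left]
    rintro x h1 h2
    obtain ⟨q, hq, rfl⟩ := Finset.mem_image.mp h1
    obtain ⟨p, hp, he⟩ := Finset.mem_image.mp h2
    have hp0 : p = i 0 := (Prod.ext_iff.mp he).1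
    have := (Finset.mem_Ioo.mp hp).1
    rw [hp0] at this
    exact absurd (lt_trans h0m1 this) (lt_irrefl _)
  have hd3 : Disjoint ((I.image fun q => ((i 0, q) : Fin n × Fin n)) ∪
      (I.image fun p => ((p, i (m+2)) : Fin n × Fin n))) {((i 0, i (m+2)) : Fin n × Fin n)} := by
    rw [Finset.disjoint_right]
    intro x hx h'
    rw [Finset.mem_singleton] at hx
    subst hx
    rcases Finset.mem_union.mp h' with h | h
    · obtain ⟨q, hq, he⟩ := Finset.mem_image.mp h
      have : q = i (m+2) := (Prod.ext_iff.mp he).2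
      rw [this] at hq
      exact absurd (Finset.mem_Ioo.mp hq).2 (lt_irrefl _)
    · obtain ⟨p, hp, he⟩ := Finset.mem_image.mp h
      have : p = i 0 := (Prod.ext_iff.mp he).1
      rw [this] at hp
      exact absurd (lt_trans h0m1 (Finset.mem_Ioo.mp hp).1) (lt_irrefl _)
  have hstepN : (i (m+1) : ℕ) < (i (m+2) : ℕ) := hstep
  have hNcard : N.card = 2 * ((i (m+2) : ℕ) - (i (m+1) : ℕ)) - 1 := by
    rw [hNdef, Finset.card_union_of_disjoint hd3, Finset.card_union_of_disjoint hd12,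
      hc1, hc2, Finset.card_singleton, hIdef, Fin.card_Ioo]
    omega
  have hfinal : invNum τ = invNum σ + (2 * ((i (m+2) : ℕ) - (i (m+1) : ℕ)) - 1) := by
    have e1 : invNum τ = B.card := rfl
    have e2 : invNum σ = A.card := rfl
    rw [e1, e2, hBeq, Finset.card_union_of_disjoint hdisj, hNcard]
  refine ⟨hfinal, ?_⟩
  rw [hfinal]
  omega
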